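/- Let G be a finite simple graph with at least one edge. Then c₂(G) ≠ mr(G, F₂) if and only if there exists a subgraph complementation system for G of cardinality c₂(G) in which every vertex of G appears an even number of times. -/

import Mathlib

open Matrix

/-- A subgraph complementation system for `G`: a finite collection (multiset) of subsets of
vertices such that two distinct vertices are adjacent iff they lie together in an odd
number of the sets. -/
def IsSCS {V : Type*} [DecidableEq V] (G : SimpleGraph V) (𝒞 : Multiset (Finset V)) : Prop :=
  ∀ u v : V, u ≠ v →
    (G.Adj u v ↔ Odd (Multiset.card (𝒞.filter (fun C => u ∈ C ∧ v ∈ C))))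

/-- The subgraph complementation number `c₂(G)`: the minimum cardinality of a subgraph
complementation system for `G`. -/
noncomputable def c2 {V : Type*} [DecidableEq V] (G : SimpleGraph V) : ℕ :=
  sInf {k | ∃ 𝒞 : Multiset (Finset V), IsSCS G 𝒞 ∧ Multiset.card 𝒞 = k}

/-- A symmetric matrix over `F₂` fits `G` if its off-diagonal entries record adjacency. -/
def FitsF2 {V : Type*} (G : SimpleGraph V) (A : Matrix V V (ZMod 2)) : Prop :=
  A.IsSymm ∧ ∀ u v : V, u ≠ v → (A u v = 1 ↔ G.Adj u v)

/-- The minimum rank of `G` over `F₂`: the minimum rank of a symmetric matrix over `F₂`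
that fits `G`. -/
noncomputable def mrF2 {V : Type*} [Fintype V] (G : SimpleGraph V) : ℕ :=
  sInf {k | ∃ A : Matrix V V (ZMod 2), FitsF2 G A ∧ A.rank = k}


section Aux
variable {V : Type*} [Fintype V] [DecidableEq V]

lemma zmod2_cases (a : ZMod 2) : a = 0 ∨ a = 1 := by revert a; decide
lemma zmod2_mul_self (a : ZMod 2) : a * a = a := by revert a; decide
lemma zmod2_add_self (a : ZMod 2) : a + a = 0 := by revert a; decide

lemma odd_iff_cast_eq_one (n : ℕ) : Odd n ↔ (n : ZMod 2) = 1 := by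
  rw [Nat.odd_iff]
  constructor
  · intro h; rw [← Nat.mod_add_div n 2]; push_cast [h]; simp
    exact Or.inl (by decide)
  · intro h
    rcases Nat.mod_two_eq_zero_or_one n with h0 | h1
    · exfalso
      have : (n : ZMod 2) = 0 := by
        rw [← Nat.mod_add_div n 2]; push_cast [h0]; simp
        exact Or.inl (by decide)
      rw [this] at h; exact one_ne_zero h.symm
    · exact h1

lemma even_iff_cast_eq_zero (n : ℕ) : Even n ↔ (n : ZMod 2) = 0 := by
  rw [← Nat.not_odd_iff_even, odd_iff_cast_eq_one]
  rcases zmod2_cases (n : ZMod 2) with h | h <;> simp [h]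

end Aux
set_option linter.unusedSectionVars false

section Mat
variable {V : Type*} [Fintype V] [DecidableEq V]

noncomputable def matV (M : Multiset (V → ZMod 2)) : Matrix V V (ZMod 2) :=
  (M.map fun x => vecMulVec x x).sum

@[simp] lemma matV_zero : matV (0 : Multiset (V → ZMod 2)) = 0 := rfl

@[simp] lemma matV_cons (x : V → ZMod 2) (M : Multiset (V → ZMod 2)) :
    matV (x ::ₘ M) = vecMulVec x x + matV M := by
  simp [matV]

lemma vecMulVec_self_isSymm (x : V → ZMod 2) : (vecMulVec x x).IsSymm := by
  ext i j; simp [vecMulVec_apply, mul_comm]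

lemma matV_isSymm (M : Multiset (V → ZMod 2)) : (matV M).IsSymm := by
  induction M using Multiset.induction with
  | empty => simp [Matrix.IsSymm]
  | cons x M ih => rw [matV_cons]; exact (vecMulVec_self_isSymm x).add ih

lemma matV_diag (M : Multiset (V → ZMod 2)) (v : V) : matV M v v = M.sum v := by
  induction M using Multiset.induction with
  | empty => simp
  | cons x M ih => simp [ih, vecMulVec_apply, zmod2_mul_self, Multiset.sum_cons]

lemma vecMulVec_mulVec' (x w : V → ZMod 2) :
    (vecMulVec x x).mulVec w = (x ⬝ᵥ w) • x := by
  ext i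
  simp [Matrix.mulVec, vecMulVec_apply, dotProduct, Finset.mul_sum, mul_comm, mul_left_comm]

lemma matV_eq_zero (M : Multiset (V → ZMod 2)) (h : ∀ x ∈ M, x = 0) : matV M = 0 := by
  induction M using Multiset.induction with
  | empty => simp
  | cons x M ih =>
      rw [matV_cons, h x (Multiset.mem_cons_self _ _),
        ih fun y hy => h y (Multiset.mem_cons_of_mem hy)]
      ext i j; simp [vecMulVec_apply]

lemma matV_mulVec_mem_span (M : Multiset (V → ZMod 2)) (S : Set (V → ZMod 2))
    (h : ∀ x ∈ M, x ∈ Submodule.span (ZMod 2) S) (w : V → ZMod 2) :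
    (matV M).mulVec w ∈ Submodule.span (ZMod 2) S := by
  induction M using Multiset.induction with
  | empty => simp
  | cons x M ih =>
      rw [matV_cons, Matrix.add_mulVec, vecMulVec_mulVec']
      exact Submodule.add_mem _
        (Submodule.smul_mem _ _ (h x (Multiset.mem_cons_self _ _)))
        (ih fun y hy => h y (Multiset.mem_cons_of_mem hy))

lemma matV_rank_le_span (M : Multiset (V → ZMod 2)) (S : Finset (V → ZMod 2))
    (h : ∀ x ∈ M, x ∈ Submodule.span (ZMod 2) (S : Set (V → ZMod 2))) :
    (matV M).rank ≤ S.card := by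
  have h1 : LinearMap.range (matV M).mulVecLin
      ≤ Submodule.span (ZMod 2) (S : Set (V → ZMod 2)) := by
    rintro y ⟨w, rfl⟩
    exact matV_mulVec_mem_span M _ h w
  calc (matV M).rank
      ≤ Module.finrank (ZMod 2) (Submodule.span (ZMod 2) (S : Set (V → ZMod 2))) :=
        Submodule.finrank_mono h1
    _ ≤ S.card := finrank_span_finset_le_card S

lemma matV_rank_le (M : Multiset (V → ZMod 2)) : (matV M).rank ≤ Multiset.card M := by
  calc (matV M).rank ≤ M.toFinset.card :=
        matV_rank_le_span M M.toFinset fun x hx =>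
          Submodule.subset_span (by simpa using hx)
    _ ≤ Multiset.card M := Multiset.toFinset_card_le M

lemma matV_rank_lt (M : Multiset (V → ZMod 2)) (h0 : matV M ≠ 0) (hsum : M.sum = 0) :
    (matV M).rank + 1 ≤ Multiset.card M := by
  have hex : ∃ x ∈ M, x ≠ 0 := by
    by_contra hc
    push_neg at hc
    exact h0 (matV_eq_zero M hc)
  obtain ⟨x, hxM, hxne⟩ := hex
  set M' := M.erase x with hM'
  have hMeq : M = x ::ₘ M' := (Multiset.cons_erase hxM).symm
  have hxsum : x = M'.sum := by
    have h1 : x + M'.sum = 0 := by rw [hMeq] at hsum; simpa [Multiset.sum_cons] using hsum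
    have h2 : x + (x + M'.sum) = x := by rw [h1]; simp
    have h3 : x + (x + M'.sum) = M'.sum := by
      rw [← add_assoc]
      have : x + x = 0 := funext fun v => zmod2_add_self (x v)
      rw [this, zero_add]
    rw [← h3, h2]
  have hspan : ∀ y ∈ M, y ∈ Submodule.span (ZMod 2) (M'.toFinset : Set (V → ZMod 2)) := by
    intro y hy
    rw [hMeq, Multiset.mem_cons] at hy
    rcases hy with rfl | hy
    · rw [hxsum]
      exact multiset_sum_mem _ fun z hz =>
        Submodule.subset_span (by simpa using hz)
    · exact Submodule.subset_span (by simpa using hy)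
  have h4 : (matV M).rank ≤ M'.toFinset.card := matV_rank_le_span M M'.toFinset hspan
  have h5 : M'.toFinset.card ≤ Multiset.card M' := Multiset.toFinset_card_le M'
  have h6 : Multiset.card M = Multiset.card M' + 1 := by rw [hMeq]; simp
  omega

end Mat
section Peel
variable {V : Type*} [Fintype V] [DecidableEq V]

lemma vecMul_vecMulVec' (z x : V → ZMod 2) :
    z ᵥ* (vecMulVec x x) = (z ⬝ᵥ x) • x := by
  ext j
  simp only [Matrix.vecMul, vecMulVec_apply, dotProduct, Pi.smul_apply, smul_eq_mul]
  rw [Finset.sum_mul]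
  apply Finset.sum_congr rfl
  intros; ring

lemma vecMul_symm (A : Matrix V V (ZMod 2)) (hA : A.IsSymm) (z : V → ZMod 2) :
    z ᵥ* A = A.mulVec z := by
  conv_lhs => rw [← hA]
  rw [Matrix.vecMul_transpose]

lemma matrix_add_self (X : Matrix V V (ZMod 2)) : X + X = 0 := by
  ext i j; exact zmod2_add_self _

lemma vecMul_peel (A : Matrix V V (ZMod 2)) (hA : A.IsSymm) (z : V → ZMod 2)
    (hz : z ⬝ᵥ A.mulVec z = 1) :
    z ᵥ* (A + vecMulVec (A.mulVec z) (A.mulVec z)) = 0 := by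
  rw [Matrix.vecMul_add, vecMul_vecMulVec', vecMul_symm A hA z, hz, one_smul]
  exact funext fun v => zmod2_add_self _

lemma peel_symm (A : Matrix V V (ZMod 2)) (hA : A.IsSymm) (y : V → ZMod 2) :
    (A + vecMulVec y y).IsSymm := hA.add (vecMulVec_self_isSymm y)

lemma peel_rank (A : Matrix V V (ZMod 2)) (hA : A.IsSymm) (z : V → ZMod 2)
    (hz : z ⬝ᵥ A.mulVec z = 1) :
    (A + vecMulVec (A.mulVec z) (A.mulVec z)).rank + 1 = A.rank := by
  classical
  set y := A.mulVec z with hy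
  set B := A + vecMulVec y y with hB
  have hyne : y ≠ 0 := by
    intro h
    rw [h] at hz
    simp at hz
  have hABmul : ∀ w, B.mulVec w = A.mulVec w + (y ⬝ᵥ w) • y := by
    intro w
    rw [hB, Matrix.add_mulVec, vecMulVec_mulVec']
  have hyB : y ∉ LinearMap.range B.mulVecLin := by
    rintro ⟨w, hw⟩
    have h2 : z ⬝ᵥ B.mulVec w = 0 := by
      rw [Matrix.dotProduct_mulVec, vecMul_peel A hA z hz, zero_dotProduct]
    have hw' : B.mulVec w = y := hw
    rw [hw', hz] at h2
    exact one_ne_zero h2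
  have hyA : y ∈ LinearMap.range A.mulVecLin := ⟨z, rfl⟩
  have hBA : LinearMap.range B.mulVecLin ≤ LinearMap.range A.mulVecLin := by
    rintro t ⟨w, rfl⟩
    have : B.mulVec w = A.mulVec w + (y ⬝ᵥ w) • y := hABmul w
    show B.mulVec w ∈ _
    rw [this]
    exact Submodule.add_mem _ ⟨w, rfl⟩ (Submodule.smul_mem _ _ hyA)
  have heq : LinearMap.range A.mulVecLin
      = LinearMap.range B.mulVecLin ⊔ Submodule.span (ZMod 2) {y} := by
    apply le_antisymm
    · rintro t ⟨w, rfl⟩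
      have hA' : A.mulVec w = B.mulVec w + (y ⬝ᵥ w) • y := by
        rw [hABmul w, add_assoc, ← add_smul, zmod2_add_self, zero_smul, add_zero]
      show A.mulVec w ∈ _
      rw [hA']
      exact Submodule.add_mem _ (Submodule.mem_sup_left ⟨w, rfl⟩)
        (Submodule.smul_mem _ _ (Submodule.mem_sup_right (Submodule.mem_span_singleton_self y)))
    · exact sup_le hBA ((Submodule.span_singleton_le_iff_mem _ _).2 hyA)
  have hlt : LinearMap.range B.mulVecLin <
      LinearMap.range B.mulVecLin ⊔ Submodule.span (ZMod 2) {y} := by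
    refine lt_of_le_of_ne le_sup_left fun hcon => hyB ?_
    rw [hcon]
    exact Submodule.mem_sup_right (Submodule.mem_span_singleton_self y)
  have h1 : B.rank < A.rank := by
    rw [Matrix.rank, Matrix.rank, heq]
    exact Submodule.finrank_lt_finrank_of_lt hlt
  have h2 : A.rank ≤ B.rank + 1 := by
    rw [Matrix.rank, Matrix.rank, heq]
    have := Submodule.finrank_sup_add_finrank_inf_eq
      (LinearMap.range B.mulVecLin) (Submodule.span (ZMod 2) {y})
    have hspan : Module.finrank (ZMod 2) (Submodule.span (ZMod 2) {y}) = 1 :=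
      finrank_span_singleton hyne
    omega
  omega

end Peel
section Decomp
variable {V : Type*} [Fintype V] [DecidableEq V]

lemma zmod2_eq_of_add_eq_zero (a b : ZMod 2) (h : a + b = 0) : a = b := by
  revert a b; decide

lemma cancel_peel (A X : Matrix V V (ZMod 2)) : X + (A + X) = A := by
  rw [add_comm A X, ← add_assoc, matrix_add_self, zero_add]

lemma diag_dot (A : Matrix V V (ZMod 2)) (v : V) :
    (Pi.single v 1 : V → ZMod 2) ⬝ᵥ A.mulVec (Pi.single v 1 : V → ZMod 2) = A v v := by
  rw [Matrix.mulVec_single]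
  simp [dotProduct, Pi.single_apply]

lemma decomp_nonalt : ∀ (r : ℕ) (A : Matrix V V (ZMod 2)), A.IsSymm → A.rank ≤ r →
    (∃ v, A v v = 1) → ∃ M : Multiset (V → ZMod 2), Multiset.card M = r ∧ matV M = A := by
  intro r
  induction r with
  | zero =>
      rintro A hA hr ⟨v, hv⟩
      exfalso
      have hz : (Pi.single v 1 : V → ZMod 2) ⬝ᵥ A.mulVec (Pi.single v 1 : V → ZMod 2) = 1 := by
        rw [diag_dot, hv]
      have := peel_rank A hA _ hz
      omega
  | succ r ih =>
      rintro A hA hr ⟨v, hv⟩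
      have hz : (Pi.single v 1 : V → ZMod 2) ⬝ᵥ A.mulVec (Pi.single v 1 : V → ZMod 2) = 1 := by
        rw [diag_dot, hv]
      set z : V → ZMod 2 := (Pi.single v 1 : V → ZMod 2) with hzdef
      set y := A.mulVec z with hydef
      set B := A + vecMulVec y y with hBdef
      have hBsymm : B.IsSymm := peel_symm A hA y
      have hBrank : B.rank + 1 = A.rank := peel_rank A hA z hz
      have hBr : B.rank ≤ r := by omega
      have hAeq : vecMulVec y y + B = A := cancel_peel A (vecMulVec y y)
      by_cases hd : ∃ u, B u u = 1
      · obtain ⟨M, hc, hm⟩ := ih B hBsymm hBr hd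
        exact ⟨y ::ₘ M, by rw [Multiset.card_cons, hc], by rw [matV_cons, hm, hAeq]⟩
      · have hdiag : ∀ u, B u u = 0 := fun u =>
          (zmod2_cases (B u u)).resolve_right fun h1 => hd ⟨u, h1⟩
        by_cases hB0 : B = 0
        · refine ⟨y ::ₘ Multiset.replicate r (0 : V → ZMod 2),
            by rw [Multiset.card_cons, Multiset.card_replicate], ?_⟩
          rw [matV_cons, matV_eq_zero _ (fun x hx => (Multiset.eq_of_mem_replicate hx)),
            add_zero, ← hAeq, hB0, add_zero]
        · have hrow : ∀ j, B v j = 0 := by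
            have h0 := vecMul_peel A hA z hz
            intro j
            have := congrFun h0 j
            rw [← hydef, ← hBdef] at this
            simpa [hzdef, Matrix.vecMul, dotProduct, Pi.single_apply] using this
          have hex : ∃ u w, B u w = 1 := by
            by_contra hc
            push_neg at hc
            apply hB0
            ext i j
            exact ((zmod2_cases (B i j)).resolve_right (hc i j))
          obtain ⟨u, w, huw⟩ := hex
          set b := B.mulVec (Pi.single u 1 : V → ZMod 2) with hbdef
          have hbval : ∀ i, b i = B i u := by
            intro i; rw [hbdef, Matrix.mulVec_single]; simp
          have hyval : ∀ i, y i = A i v := by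
            intro i; rw [hydef, hzdef, Matrix.mulVec_single]; simp
          set z' : V → ZMod 2 :=
            (1 + y u) • (Pi.single v 1 : V → ZMod 2) + (Pi.single u 1 : V → ZMod 2) with hz'def
          have hy' : A.mulVec z' = y + b := by
            have hc : A.mulVec (Pi.single u 1 : V → ZMod 2) = b + (y u) • y := by
              have h5 : B.mulVec (Pi.single u 1 : V → ZMod 2)
                  = A.mulVec (Pi.single u 1 : V → ZMod 2)
                    + (y ⬝ᵥ (Pi.single u 1 : V → ZMod 2)) • y := by
                rw [hBdef, Matrix.add_mulVec, vecMulVec_mulVec']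
              rw [← hbdef] at h5
              have hdot : y ⬝ᵥ (Pi.single u 1 : V → ZMod 2) = y u := by
                simp [dotProduct, Pi.single_apply]
              rw [hdot] at h5
              rw [h5, add_assoc, ← add_smul, zmod2_add_self, zero_smul, add_zero]
            rw [hz'def, Matrix.mulVec_add, Matrix.mulVec_smul, hc, ← hzdef, ← hydef]
            ext i
            simp only [Pi.add_apply, Pi.smul_apply, smul_eq_mul]
            rcases zmod2_cases (y u) with h | h <;> rcases zmod2_cases (y i) with h2 | h2 <;>
              rcases zmod2_cases (b i) with h3 | h3 <;> simp only [h, h2, h3] <;> decide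
          have hbv : b v = 0 := by rw [hbval v]; exact hrow u
          have hbu : b u = 0 := by rw [hbval u]; exact hdiag u
          have hbw : b w = 1 := by rw [hbval w, hBsymm.apply u w, huw]
          have hyv : y v = 1 := by rw [hyval v]; exact hv
          have hz' : z' ⬝ᵥ A.mulVec z' = 1 := by
            rw [hy', hz'def, add_dotProduct, smul_dotProduct,
              single_dotProduct, single_dotProduct]
            simp only [Pi.add_apply, hyv, hbv, hbu, one_mul, smul_eq_mul]
            rcases zmod2_cases (y u) with h | h <;> rw [h] <;> decide
          set B' := A + vecMulVec (A.mulVec z') (A.mulVec z') with hB'def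
          have hB'symm : B'.IsSymm := peel_symm A hA _
          have hB'rank : B'.rank + 1 = A.rank := peel_rank A hA z' hz'
          have hAww : A w w = y w * y w := by
            apply zmod2_eq_of_add_eq_zero
            have h6 := hdiag w
            rw [hBdef] at h6
            simpa [Matrix.add_apply, vecMulVec_apply] using h6
          have hB'ww : B' w w = 1 := by
            rw [hB'def]
            simp only [Matrix.add_apply, vecMulVec_apply, hy', Pi.add_apply, hbw, hAww]
            rcases zmod2_cases (y w) with h | h <;> rw [h] <;> decide
          obtain ⟨M, hc, hm⟩ := ih B' hB'symm (by omega) ⟨w, hB'ww⟩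
          exact ⟨A.mulVec z' ::ₘ M, by rw [Multiset.card_cons, hc],
            by rw [matV_cons, hm, cancel_peel]⟩

end Decomp
section Alt
variable {V : Type*} [Fintype V] [DecidableEq V]

lemma decomp_alt (A : Matrix V V (ZMod 2)) (hA : A.IsSymm) (hd : ∀ v, A v v = 0)
    (h0 : A ≠ 0) :
    ∃ M : Multiset (V → ZMod 2), Multiset.card M = A.rank + 1 ∧ matV M = A := by
  have hex : ∃ u w, A u w = 1 := by
    by_contra hc
    push_neg at hc
    apply h0
    ext i j
    exact (zmod2_cases (A i j)).resolve_right (hc i j)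
  obtain ⟨u, w, huw⟩ := hex
  set c := A.mulVec (Pi.single u 1 : V → ZMod 2) with hcdef
  have hcval : ∀ i, c i = A i u := by
    intro i; rw [hcdef, Matrix.mulVec_single]; simp
  set A' := A + vecMulVec c c with hA'def
  have hA'symm : A'.IsSymm := peel_symm A hA c
  have hrank : A'.rank ≤ A.rank := by
    have hcA : c ∈ LinearMap.range A.mulVecLin := ⟨_, rfl⟩
    have hle : LinearMap.range A'.mulVecLin ≤ LinearMap.range A.mulVecLin := by
      rintro t ⟨x, rfl⟩
      show A'.mulVec x ∈ _
      rw [hA'def, Matrix.add_mulVec, vecMulVec_mulVec']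
      exact Submodule.add_mem _ ⟨x, rfl⟩ (Submodule.smul_mem _ _ hcA)
    exact Submodule.finrank_mono hle
  have hA'ww : A' w w = 1 := by
    rw [hA'def]
    simp only [Matrix.add_apply, vecMulVec_apply, hd w, zero_add, hcval w,
      hA.apply u w, huw, mul_one]
  obtain ⟨M, hc, hm⟩ := decomp_nonalt A.rank A' hA'symm hrank ⟨w, hA'ww⟩
  exact ⟨c ::ₘ M, by rw [Multiset.card_cons, hc],
    by rw [matV_cons, hm, cancel_peel]⟩

end Alt

section Bridge
variable {V : Type*} [Fintype V] [DecidableEq V]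

def indVec (C : Finset V) : V → ZMod 2 := fun v => if v ∈ C then 1 else 0

noncomputable def matOf (𝒞 : Multiset (Finset V)) : Matrix V V (ZMod 2) :=
  matV (𝒞.map indVec)

lemma matOf_apply (𝒞 : Multiset (Finset V)) (u v : V) :
    matOf 𝒞 u v = ((Multiset.card (𝒞.filter fun C => u ∈ C ∧ v ∈ C)) : ZMod 2) := by
  induction 𝒞 using Multiset.induction with
  | empty => simp [matOf]
  | cons C 𝒞 ih =>
      have h1 : matOf (C ::ₘ 𝒞) = vecMulVec (indVec C) (indVec C) + matOf 𝒞 := by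
        rw [matOf, Multiset.map_cons, matV_cons, ← matOf]
      rw [h1, Matrix.add_apply, ih, Multiset.filter_cons]
      by_cases h : u ∈ C ∧ v ∈ C
      · rw [if_pos h]
        simp only [vecMulVec_apply, indVec, if_pos h.1, if_pos h.2, one_mul]
        rw [Multiset.card_add, Multiset.card_singleton]
        push_cast
        ring
      · rw [if_neg h]
        have h2 : indVec C u * indVec C v = 0 := by
          rcases Decidable.not_and_iff_or_not.mp h with h3 | h3 <;>
            simp [indVec, h3]
      -- fallthrough
        simp [vecMulVec_apply, h2]

lemma matOf_isSymm (𝒞 : Multiset (Finset V)) : (matOf 𝒞).IsSymm := matV_isSymm _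

lemma matOf_diag (𝒞 : Multiset (Finset V)) (v : V) :
    matOf 𝒞 v v = ((Multiset.card (𝒞.filter fun C => v ∈ C)) : ZMod 2) := by
  rw [matOf_apply]
  congr 2
  apply Multiset.filter_congr
  intro C _
  simp

noncomputable def finsetOf (x : V → ZMod 2) : Finset V := Finset.univ.filter fun v => x v = 1

lemma indVec_finsetOf (x : V → ZMod 2) : indVec (finsetOf x) = x := by
  funext v
  rcases zmod2_cases (x v) with h | h <;> simp [indVec, finsetOf, h]

lemma matOf_map_finsetOf (M : Multiset (V → ZMod 2)) :
    matOf (M.map finsetOf) = matV M := by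
  rw [matOf, Multiset.map_map]
  rw [show (indVec ∘ finsetOf : (V → ZMod 2) → (V → ZMod 2)) = id from funext indVec_finsetOf,
    Multiset.map_id]

end Bridge
section Main
variable {V : Type*} [Fintype V] [DecidableEq V]

lemma isSCS_iff_matOf (G : SimpleGraph V) (𝒞 : Multiset (Finset V)) :
    IsSCS G 𝒞 ↔ ∀ u v : V, u ≠ v → (G.Adj u v ↔ matOf 𝒞 u v = 1) := by
  unfold IsSCS
  constructor
  · intro h u v huv
    rw [matOf_apply, ← odd_iff_cast_eq_one]
    exact h u v huv
  · intro h u v huv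
    rw [odd_iff_cast_eq_one, ← matOf_apply]
    exact h u v huv

lemma fits_matOf (G : SimpleGraph V) (𝒞 : Multiset (Finset V)) (h : IsSCS G 𝒞) :
    FitsF2 G (matOf 𝒞) :=
  ⟨matOf_isSymm _, fun u v huv => (((isSCS_iff_matOf G 𝒞).mp h) u v huv).symm⟩

lemma scs_of_fits (G : SimpleGraph V) (A : Matrix V V (ZMod 2)) (hA : FitsF2 G A)
    (M : Multiset (V → ZMod 2)) (hm : matV M = A) : IsSCS G (M.map finsetOf) := by
  rw [isSCS_iff_matOf]
  intro u v huv
  rw [matOf_map_finsetOf, hm]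
  exact (hA.2 u v huv).symm

lemma fits_exists (G : SimpleGraph V) : ∃ A, FitsF2 G A := by
  classical
  refine ⟨Matrix.of (fun u v => if G.Adj u v then (1 : ZMod 2) else 0), ?_, ?_⟩
  · ext i j
    simp only [Matrix.transpose_apply, Matrix.of_apply]
    by_cases h : G.Adj i j
    · rw [if_pos h, if_pos (G.adj_symm h)]
    · rw [if_neg h, if_neg (fun h2 => h (G.adj_symm h2))]
  · intro u v huv
    by_cases h : G.Adj u v <;> simp [h]

lemma fits_ne_zero (G : SimpleGraph V) (hne : ∃ u v : V, G.Adj u v)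
    (A : Matrix V V (ZMod 2)) (hA : FitsF2 G A) : A ≠ 0 := by
  obtain ⟨u, v, huv⟩ := hne
  intro h0
  have h1 : A u v = 1 := (hA.2 u v huv.ne).mpr huv
  rw [h0] at h1
  exact one_ne_zero h1.symm

lemma scs_exists_of_fits (G : SimpleGraph V) (hne : ∃ u v : V, G.Adj u v)
    (A : Matrix V V (ZMod 2)) (hA : FitsF2 G A) :
    ∃ 𝒞 : Multiset (Finset V), IsSCS G 𝒞 ∧ Multiset.card 𝒞 ≤ A.rank + 1 := by
  by_cases hd : ∃ v, A v v = 1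
  · obtain ⟨M, hcard, hm⟩ := decomp_nonalt A.rank A hA.1 le_rfl hd
    exact ⟨M.map finsetOf, scs_of_fits G A hA M hm,
      by rw [Multiset.card_map, hcard]; omega⟩
  · have hd0 : ∀ v, A v v = 0 := fun v =>
      (zmod2_cases (A v v)).resolve_right fun h1 => hd ⟨v, h1⟩
    obtain ⟨M, hcard, hm⟩ := decomp_alt A hA.1 hd0 (fits_ne_zero G hne A hA)
    exact ⟨M.map finsetOf, scs_of_fits G A hA M hm,
      by rw [Multiset.card_map, hcard]⟩

lemma c2_mem (G : SimpleGraph V) (hne : ∃ u v : V, G.Adj u v) :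
    ∃ 𝒞 : Multiset (Finset V), IsSCS G 𝒞 ∧ Multiset.card 𝒞 = c2 G := by
  obtain ⟨A, hA⟩ := fits_exists G
  obtain ⟨𝒞, h1, _⟩ := scs_exists_of_fits G hne A hA
  have := Nat.sInf_mem (s := {k | ∃ 𝒞 : Multiset (Finset V),
    IsSCS G 𝒞 ∧ Multiset.card 𝒞 = k}) ⟨Multiset.card 𝒞, 𝒞, h1, rfl⟩
  exact this

lemma c2_le (G : SimpleGraph V) (𝒞 : Multiset (Finset V)) (h : IsSCS G 𝒞) :
    c2 G ≤ Multiset.card 𝒞 :=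
  Nat.sInf_le ⟨𝒞, h, rfl⟩

lemma mr_mem (G : SimpleGraph V) :
    ∃ A : Matrix V V (ZMod 2), FitsF2 G A ∧ A.rank = mrF2 G := by
  obtain ⟨A, hA⟩ := fits_exists G
  exact Nat.sInf_mem (s := {k | ∃ A : Matrix V V (ZMod 2),
    FitsF2 G A ∧ A.rank = k}) ⟨A.rank, A, hA, rfl⟩

lemma mr_le (G : SimpleGraph V) (A : Matrix V V (ZMod 2)) (h : FitsF2 G A) :
    mrF2 G ≤ A.rank :=
  Nat.sInf_le ⟨A, h, rfl⟩

lemma mr_le_c2 (G : SimpleGraph V) (hne : ∃ u v : V, G.Adj u v) : mrF2 G ≤ c2 G := by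
  obtain ⟨𝒞, hscs, hcard⟩ := c2_mem G hne
  calc mrF2 G ≤ (matOf 𝒞).rank := mr_le G _ (fits_matOf G 𝒞 hscs)
    _ ≤ Multiset.card (𝒞.map indVec) := matV_rank_le _
    _ = c2 G := by rw [Multiset.card_map, hcard]

end Main
theorem stmt11 {V : Type*} [Fintype V] [DecidableEq V] (G : SimpleGraph V)
    (hne : ∃ u v : V, G.Adj u v) :
    c2 G ≠ mrF2 G ↔
      ∃ 𝒞 : Multiset (Finset V), IsSCS G 𝒞 ∧ Multiset.card 𝒞 = c2 G ∧
        ∀ v : V, Even (Multiset.card (𝒞.filter (fun C => v ∈ C))) := by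
  constructor
  · intro hdiff
    obtain ⟨B, hBfits, hBrank⟩ := mr_mem G
    by_cases hd : ∃ v, B v v = 1
    · exfalso
      obtain ⟨M, hcard, hm⟩ := decomp_nonalt B.rank B hBfits.1 le_rfl hd
      have hscs := scs_of_fits G B hBfits M hm
      have h1 : c2 G ≤ mrF2 G := by
        have h2 := c2_le G _ hscs
        rwa [Multiset.card_map, hcard, hBrank] at h2
      have h2 := mr_le_c2 G hne
      omega
    · have hd0 : ∀ v, B v v = 0 := fun v =>
        (zmod2_cases (B v v)).resolve_right fun h1 => hd ⟨v, h1⟩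
      have hB0 := fits_ne_zero G hne B hBfits
      obtain ⟨M, hcard, hm⟩ := decomp_alt B hBfits.1 hd0 hB0
      have hscs := scs_of_fits G B hBfits M hm
      have hc : Multiset.card (M.map finsetOf) = mrF2 G + 1 := by
        rw [Multiset.card_map, hcard, hBrank]
      have h1 : c2 G ≤ mrF2 G + 1 := by
        have := c2_le G _ hscs
        omega
      have h2 := mr_le_c2 G hne
      have hceq : Multiset.card (M.map finsetOf) = c2 G := by omega
      refine ⟨M.map finsetOf, hscs, hceq, ?_⟩
      intro v
      rw [even_iff_cast_eq_zero, ← matOf_diag, matOf_map_finsetOf, hm]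
      exact hd0 v
  · rintro ⟨𝒞, hscs, hcard, heven⟩ heq
    have hfits := fits_matOf G 𝒞 hscs
    have hA0 : matOf 𝒞 ≠ 0 := fits_ne_zero G hne _ hfits
    have hsum : (𝒞.map indVec).sum = 0 := by
      funext v
      rw [Pi.zero_apply, ← matV_diag, show matV (𝒞.map indVec) = matOf 𝒞 from rfl,
        matOf_diag, ← even_iff_cast_eq_zero]
      exact heven v
    have hrank := matV_rank_lt (𝒞.map indVec) hA0 hsum
    have h4 : Multiset.card (𝒞.map indVec) = c2 G := by rw [Multiset.card_map, hcard]
    have h5 : mrF2 G ≤ (matOf 𝒞).rank := mr_le G _ hfits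
    have h6 : (matV (𝒞.map indVec)).rank = (matOf 𝒞).rank := rfl
    omega
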